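/- arXiv:2311.00381 — 4 statements merged into one kernel-verified Lean document; each statement's English description precedes it below -/
import Mathlib

section
/- For any λ > 0, the sum Σ_{k=0}^∞ (1/(1+λ))^{k²} is bounded above by (1+λ)·log(1+√λ)/λ + 1/√λ. Consequently, λ·Σ_{k=0}^∞ (1/(1+λ))^{k²} ≤ (1+λ)·log(1+√λ) + √λ for all λ > 0. -/
open Real

private lemma piece_mono (x xa : ℝ) (hx0 : 0 ≤ x) (hxa : x ≤ xa) (hxa1 : xa < 1) :
    1 + x + x ^ 4 + x ^ 9 / (1 - x ^ 3) ≤ 1 + xa + xa ^ 4 + xa ^ 9 / (1 - xa ^ 3) := by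
  have hxa0 : 0 ≤ xa := hx0.trans hxa
  have hxa3 : xa ^ 3 < 1 := pow_lt_one₀ hxa0 hxa1 (by norm_num)
  have h3 : x ^ 3 ≤ xa ^ 3 := pow_le_pow_left₀ hx0 hxa 3
  have h4 : x ^ 4 ≤ xa ^ 4 := pow_le_pow_left₀ hx0 hxa 4
  have h9 : x ^ 9 ≤ xa ^ 9 := pow_le_pow_left₀ hx0 hxa 9
  have hdiv : x ^ 9 / (1 - x ^ 3) ≤ xa ^ 9 / (1 - xa ^ 3) :=
    div_le_div₀ (by positivity) h9 (by linarith) (by linarith)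
  linarith

/-- For any λ > 0, Σ_{k=0}^∞ (1/(1+λ))^{k²} ≤ (1+λ)·log(1+√λ)/λ + 1/√λ, and consequently
λ·Σ_{k=0}^∞ (1/(1+λ))^{k²} ≤ (1+λ)·log(1+√λ) + √λ. -/
theorem stmt_0 (l : ℝ) (hl : 0 < l) :
    (∑' k : ℕ, (1 / (1 + l)) ^ (k ^ 2))
        ≤ (1 + l) * Real.log (1 + Real.sqrt l) / l + 1 / Real.sqrt l ∧
    l * ∑' k : ℕ, (1 / (1 + l)) ^ (k ^ 2)
        ≤ (1 + l) * Real.log (1 + Real.sqrt l) + Real.sqrt l := by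
  have hl1 : (0:ℝ) < 1 + l := by linarith
  set x : ℝ := 1 / (1 + l) with hxdef
  set s : ℝ := Real.sqrt l with hsdef
  have hx0 : 0 < x := by rw [hxdef]; positivity
  have hx1 : x < 1 := by rw [hxdef, div_lt_one hl1]; linarith
  have hs0 : 0 < s := Real.sqrt_pos.2 hl
  have hs2 : s ^ 2 = l := Real.sq_sqrt hl.le
  have hsum : Summable (fun k : ℕ => x ^ (k ^ 2)) := by
    apply Summable.of_nonneg_of_le (fun k => by positivity) (fun k => ?_)
      (summable_geometric_of_lt_one hx0.le hx1)
    exact pow_le_pow_of_le_one hx0.le hx1.le (Nat.le_self_pow (by norm_num) k)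
  -- geometric tail bound
  have tail : ∀ n : ℕ, 0 < n → (∑' k : ℕ, x ^ ((k + n) ^ 2)) ≤ x ^ (n ^ 2) / (1 - x ^ n) := by
    intro n hn
    have hxn1 : x ^ n < 1 := pow_lt_one₀ hx0.le hx1 hn.ne'
    have hgeo : Summable (fun k : ℕ => x ^ (n ^ 2) * (x ^ n) ^ k) :=
      (summable_geometric_of_lt_one (by positivity) hxn1).mul_left _
    have hle : ∀ k : ℕ, x ^ ((k + n) ^ 2) ≤ x ^ (n ^ 2) * (x ^ n) ^ k := by
      intro k
      rw [← pow_mul, ← pow_add]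
      exact pow_le_pow_of_le_one hx0.le hx1.le (by nlinarith)
    calc (∑' k : ℕ, x ^ ((k + n) ^ 2)) ≤ ∑' k : ℕ, x ^ (n ^ 2) * (x ^ n) ^ k :=
          Summable.tsum_le_tsum hle ((summable_nat_add_iff (f := fun k : ℕ => x ^ (k ^ 2)) n).2 hsum) hgeo
      _ = x ^ (n ^ 2) * (1 - x ^ n)⁻¹ := by
          rw [tsum_mul_left, tsum_geometric_of_lt_one (by positivity) hxn1]
      _ = x ^ (n ^ 2) / (1 - x ^ n) := by rw [div_eq_mul_inv]
  -- key reduction target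
  have key : (∑' k : ℕ, x ^ (k ^ 2)) ≤ 1 + 2 / (s + s ^ 2) := by
    rcases le_total s (1/4) with hs14 | hs14
    · -- small s : arctan telescoping
      have hsum1 : Summable (fun k : ℕ => x ^ ((k + 1) ^ 2)) :=
        (summable_nat_add_iff (f := fun k : ℕ => x ^ (k ^ 2)) 1).2 hsum
      set g : ℕ → ℝ := fun i => Real.arctan ((i : ℝ) * s) with hgdef
      have hterm : ∀ k : ℕ, x ^ ((k + 1) ^ 2) ≤ (g (k + 1) - g k) / s := by
        intro k
        have hab : (k : ℝ) * s < ((k : ℝ) + 1) * s := by nlinarith [Nat.cast_nonneg (α := ℝ) k]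
        obtain ⟨c, hc, hc'⟩ := exists_hasDerivAt_eq_slope Real.arctan (fun t => 1 / (1 + t ^ 2))
          hab (Real.continuous_arctan.continuousOn) (fun t _ => Real.hasDerivAt_arctan t)
        rw [show ((k : ℝ) + 1) * s - (k : ℝ) * s = s by ring] at hc'
        have hc0 : 0 ≤ c := le_trans (by positivity) hc.1.le
        have hc2 : c ^ 2 ≤ (((k : ℝ) + 1) * s) ^ 2 := by nlinarith [hc.2]
        have h1 : 1 / (1 + (((k : ℝ) + 1) * s) ^ 2) ≤ 1 / (1 + c ^ 2) :=
          one_div_le_one_div_of_le (by positivity) (by linarith)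
        have h2 : 1 / (1 + (((k : ℝ) + 1) * s) ^ 2)
            ≤ (Real.arctan (((k : ℝ) + 1) * s) - Real.arctan ((k : ℝ) * s)) / s := by
          rw [← hc']; exact h1
        have hber : x ^ ((k + 1) ^ 2) ≤ 1 / (1 + (((k : ℝ) + 1) * s) ^ 2) := by
          have hm := one_add_mul_le_pow (by linarith : (-2:ℝ) ≤ l) ((k + 1) ^ 2)
          have hcast : 1 + (((k : ℝ) + 1) * s) ^ 2 = 1 + (((k + 1) ^ 2 : ℕ) : ℝ) * l := by
            push_cast
            rw [← hs2]; ring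
          rw [hxdef, div_pow, one_pow, hcast]
          exact one_div_le_one_div_of_le (by positivity) hm
        calc x ^ ((k + 1) ^ 2) ≤ 1 / (1 + (((k : ℝ) + 1) * s) ^ 2) := hber
          _ ≤ (Real.arctan (((k : ℝ) + 1) * s) - Real.arctan ((k : ℝ) * s)) / s := h2
          _ = (g (k + 1) - g k) / s := by rw [hgdef]; push_cast; ring_nf
      have htsum1 : (∑' k : ℕ, x ^ ((k + 1) ^ 2)) ≤ (π / 2) / s := by
        apply Summable.tsum_le_of_sum_le hsum1
        intro F
        obtain ⟨N, hN⟩ := F.exists_nat_subset_range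
        calc ∑ k ∈ F, x ^ ((k + 1) ^ 2)
            ≤ ∑ k ∈ Finset.range N, x ^ ((k + 1) ^ 2) :=
              Finset.sum_le_sum_of_subset_of_nonneg hN (fun i _ _ => by positivity)
          _ ≤ ∑ k ∈ Finset.range N, (g (k + 1) - g k) / s :=
              Finset.sum_le_sum (fun k _ => hterm k)
          _ = (∑ k ∈ Finset.range N, (g (k + 1) - g k)) / s := by
              rw [Finset.sum_div]
          _ = (g N - g 0) / s := by rw [Finset.sum_range_sub g]
          _ ≤ (π / 2) / s := by
              have hg0 : g 0 = 0 := by simp [hgdef]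
              have hgN : g N ≤ π / 2 := (Real.arctan_lt_pi_div_two _).le
              rw [hg0, sub_zero]
              gcongr
      -- assemble the small-s case
      have hsplit := Summable.sum_add_tsum_nat_add 1 hsum
      have h1 : (∑ i ∈ Finset.range 1, x ^ (i ^ 2)) = 1 := by simp
      have hpi : π < 3.15 := Real.pi_lt_d2
      have hfin : (π / 2) / s ≤ 2 / (s + s ^ 2) := by
        rw [div_le_div_iff₀ hs0 (by positivity)]
        nlinarith [mul_le_mul_of_nonneg_left hs14 hs0.le, mul_pos hs0 hs0]
      have := htsum1
      rw [← hsplit, h1]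
      linarith
    · -- s ≥ 1/4 : explicit partial sums plus geometric tail
      have hsplit := Summable.sum_add_tsum_nat_add 3 hsum
      have h3 : (∑ i ∈ Finset.range 3, x ^ (i ^ 2)) = 1 + x + x ^ 4 := by
        rw [Finset.sum_range_succ, Finset.sum_range_succ, Finset.sum_range_succ]
        norm_num
      have hS : (∑' k : ℕ, x ^ (k ^ 2)) ≤ 1 + x + x ^ 4 + x ^ 9 / (1 - x ^ 3) := by
        have ht := tail 3 (by norm_num)
        norm_num at ht
        rw [← hsplit, h3]
        linarith
      rcases le_total s 1 with hs11 | hs11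
      · -- 1/4 ≤ s ≤ 1 : five subintervals
        have piece : ∀ a b : ℝ, 0 < a → a ≤ s → s ≤ b →
            1 + 1/(1+a^2) + (1/(1+a^2)) ^ 4 + (1/(1+a^2)) ^ 9 / (1 - (1/(1+a^2)) ^ 3)
              ≤ 1 + 2 / (b + b ^ 2) →
            (∑' k : ℕ, x ^ (k ^ 2)) ≤ 1 + 2 / (s + s ^ 2) := by
          intro a b ha0 ha hb hnum
          have hla : a ^ 2 ≤ l := by rw [← hs2]; exact pow_le_pow_left₀ ha0.le ha 2
          have hxa : x ≤ 1/(1+a^2) := by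
            rw [hxdef]
            exact one_div_le_one_div_of_le (by positivity) (by linarith)
          have hxa1 : 1/(1+a^2) < 1 := by
            rw [div_lt_one (by positivity)]
            nlinarith
          have hmono := piece_mono x (1/(1+a^2)) hx0.le hxa hxa1
          have hb2 : 2 / (b + b ^ 2) ≤ 2 / (s + s ^ 2) := by
            apply div_le_div_of_nonneg_left (by norm_num) (by positivity)
            nlinarith
          linarith
        rcases le_total s (9/32) with h | h
        · exact piece (1/4) (9/32) (by norm_num) hs14 h (by norm_num)
        rcases le_total s (11/32) with h' | h'
        · exact piece (9/32) (11/32) (by norm_num) h h' (by norm_num)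
        rcases le_total s (15/32) with h'' | h''
        · exact piece (11/32) (15/32) (by norm_num) h' h'' (by norm_num)
        rcases le_total s (45/64) with h3' | h3'
        · exact piece (15/32) (45/64) (by norm_num) h'' h3' (by norm_num)
        · exact piece (45/64) 1 (by norm_num) h3' hs11 (by norm_num)
      · -- s ≥ 1 : crude geometric bound
        have hsplit1 := Summable.sum_add_tsum_nat_add 1 hsum
        have h1 : (∑ i ∈ Finset.range 1, x ^ (i ^ 2)) = 1 := by simp
        have ht := tail 1 one_pos
        norm_num at ht
        have hxl : x / (1 - x) = 1 / l := by
          rw [hxdef]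
          rw [show (1:ℝ) - 1/(1+l) = l/(1+l) by field_simp; ring]
          field_simp
        have hl2 : 1 / l ≤ 2 / (s + s ^ 2) := by
          rw [← hs2, div_le_div_iff₀ (by positivity) (by positivity)]
          nlinarith [mul_le_mul_of_nonneg_left hs11 hs0.le]
        rw [← hsplit1, h1]
        rw [hxl] at ht
        linarith
  -- lower bound on the RHS
  have hlog : s / (1 + s) ≤ Real.log (1 + s) := by
    have h := Real.log_le_sub_one_of_pos (x := 1 / (1 + s)) (by positivity)
    rw [one_div, Real.log_inv] at h
    have h2 : (1:ℝ) - (1 + s)⁻¹ = s / (1 + s) := by field_simp; ring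
    linarith
  have hR : 1 + 2 / (s + s ^ 2) ≤ (1 + l) * Real.log (1 + s) / l + 1 / s := by
    have h1 : (1 + l) * (s / (1 + s)) / l ≤ (1 + l) * Real.log (1 + s) / l := by
      gcongr
    have h2 : 1 + 2 / (s + s ^ 2) = (1 + l) * (s / (1 + s)) / l + 1 / s := by
      rw [← hs2]
      field_simp
      ring
    rw [h2]
    linarith
  have main : (∑' k : ℕ, x ^ (k ^ 2)) ≤ (1 + l) * Real.log (1 + s) / l + 1 / s :=
    key.trans hR
  refine ⟨main, ?_⟩
  have h2 := mul_le_mul_of_nonneg_left main hl.le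
  have h3 : l * ((1 + l) * Real.log (1 + s) / l + 1 / s) = (1 + l) * Real.log (1 + s) + s := by
    rw [← hs2]
    field_simp
  linarith [h3 ▸ h2]
end

section
/- λ·Σ_{k=0}^∞ (1/(1+λ))^{k²} tends to 0 as λ → 0⁺. -/
set_option maxHeartbeats 1000000


/-- λ·Σ_{k=0}^∞ (1/(1+λ))^{k²} tends to 0 as λ → 0⁺. -/
theorem stmt_1 :
    Filter.Tendsto (fun l : ℝ => l * ∑' k : ℕ, (1 / (1 + l)) ^ (k ^ 2))
      (nhdsWithin 0 (Set.Ioi 0)) (nhds 0) := by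
  rw [Metric.tendsto_nhdsWithin_nhds]
  intro ε hε
  set N : ℕ := ⌈3 / ε⌉₊ + 1 with hNdef
  have hNpos : (0:ℝ) < N := by positivity
  have hNε : 3 / ε < N := by
    have := Nat.le_ceil (3/ε)
    push_cast [hNdef]
    linarith
  refine ⟨min (ε/(3*N)) (1/(2*N)), by positivity, ?_⟩
  intro l hl hdist
  simp only [Real.dist_eq, sub_zero] at hdist ⊢
  have hl0 : 0 < l := hl
  rw [abs_of_pos hl0] at hdist
  have hlA : l < ε/(3*N) := lt_of_lt_of_le hdist (min_le_left _ _)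
  have hlB : l < 1/(2*N) := lt_of_lt_of_le hdist (min_le_right _ _)
  have hlN : l * N < ε / 3 := by
    rw [lt_div_iff₀ (by positivity)] at hlA
    rw [lt_div_iff₀ (by norm_num)]
    nlinarith
  have hlhalf : l * N ≤ 1/2 := by
    rw [div_eq_inv_mul, lt_inv_mul_iff₀ (by positivity)] at hlB
    nlinarith
  have hN1 : (1:ℝ) ≤ N := Nat.one_le_cast.mpr (by omega)
  have hlhalf' : l ≤ 1/2 := by nlinarith
  have h1l : (0:ℝ) < 1 + l := by linarith
  set x : ℝ := 1 / (1 + l) with hxdef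
  have hx0 : 0 < x := by positivity
  have hx1 : x < 1 := (div_lt_one h1l).2 (by linarith)
  have hsum : Summable (fun k : ℕ => x ^ (k ^ 2)) := by
    refine Summable.of_nonneg_of_le (fun k => by positivity)
      (fun k => pow_le_pow_of_le_one hx0.le hx1.le (Nat.le_self_pow two_ne_zero k))
      (summable_geometric_of_lt_one hx0.le hx1)
  have hsplit := Summable.sum_add_tsum_nat_add (f := fun k : ℕ => x ^ (k ^ 2)) N hsum
  have hfin : ∑ i ∈ Finset.range N, x ^ (i ^ 2) ≤ (N : ℝ) := by
    calc ∑ i ∈ Finset.range N, x ^ (i ^ 2) ≤ ∑ i ∈ Finset.range N, 1 :=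
          Finset.sum_le_sum fun i _ => pow_le_one₀ hx0.le hx1.le
      _ = (N : ℝ) := by simp
  have hxN1 : x ^ N < 1 := pow_lt_one₀ hx0.le hx1 (by omega)
  have h1xN : 0 < 1 - x ^ N := by linarith
  have htailsum : Summable (fun i : ℕ => x ^ ((i + N) ^ 2)) :=
    (summable_nat_add_iff (f := fun k : ℕ => x ^ (k ^ 2)) N).mpr hsum
  have hT : ∑' i : ℕ, x ^ ((i + N) ^ 2) ≤ (1 - x ^ N)⁻¹ := by
    have hgeo : Summable (fun i : ℕ => (x ^ N) ^ i) :=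
      summable_geometric_of_lt_one (by positivity) hxN1
    have hle : ∀ i : ℕ, x ^ ((i + N) ^ 2) ≤ (x ^ N) ^ i := by
      intro i
      rw [← pow_mul]
      exact pow_le_pow_of_le_one hx0.le hx1.le (by nlinarith)
    calc ∑' i : ℕ, x ^ ((i + N) ^ 2) ≤ ∑' i : ℕ, (x ^ N) ^ i :=
          Summable.tsum_le_tsum hle htailsum hgeo
      _ = (1 - x ^ N)⁻¹ := tsum_geometric_of_lt_one (by positivity) hxN1
  have hBern : 1 + (N : ℝ) * l ≤ (1 + l) ^ N := one_add_mul_le_pow (by linarith) N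
  have hxpow : x ^ N * (1 + l) ^ N = 1 := by
    rw [← mul_pow, hxdef]
    field_simp
    exact one_pow N
  have hkey : l * (1 - x ^ N)⁻¹ ≤ (1 + l) ^ N / N := by
    rw [← div_eq_mul_inv, div_le_div_iff₀ h1xN hNpos]
    nlinarith [hBern, hxpow]
  have h2 : (1 + l) ^ N ≤ 2 := by
    have hBern2 : 1 + (N : ℝ) * (-l) ≤ (1 + (-l)) ^ N :=
      one_add_mul_le_pow (by linarith) N
    have hB : (1:ℝ)/2 ≤ (1 - l) ^ N := by
      have : (1:ℝ) + N * (-l) = 1 - l * N := by ring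
      rw [this] at hBern2
      have h1 : (1:ℝ) + (-l) = 1 - l := by ring
      rw [h1] at hBern2
      linarith
    have hAB : (1 + l) ^ N * (1 - l) ^ N ≤ 1 := by
      rw [← mul_pow]
      refine pow_le_one₀ (by nlinarith [hNpos, hlhalf]) (by nlinarith)
    nlinarith [pow_pos h1l N, hB, hAB]
  have h2N : 2 / (N : ℝ) < 2 * ε / 3 := by
    rw [div_lt_div_iff₀ hNpos (by norm_num)]
    rw [div_lt_iff₀ hε] at hNε
    nlinarith
  have htsum_nonneg : 0 ≤ ∑' k : ℕ, x ^ (k ^ 2) := tsum_nonneg fun k => by positivity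
  rw [abs_of_nonneg (by positivity)]
  have hTnn : 0 ≤ ∑' i : ℕ, x ^ ((i + N) ^ 2) := tsum_nonneg fun k => by positivity
  calc l * ∑' k : ℕ, x ^ (k ^ 2)
      = l * (∑ i ∈ Finset.range N, x ^ (i ^ 2)) + l * ∑' i : ℕ, x ^ ((i + N) ^ 2) := by
        rw [← hsplit]; ring
    _ ≤ l * N + (1 + l) ^ N / N := by
        refine add_le_add (by nlinarith) ?_
        calc l * ∑' i : ℕ, x ^ ((i + N) ^ 2) ≤ l * (1 - x ^ N)⁻¹ := by nlinarith
          _ ≤ (1 + l) ^ N / N := hkey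
    _ ≤ l * N + 2 / N := by
        gcongr
    _ < ε := by linarith
end

section
/- For λ ∈ (0,1], λ·Σ_{k=0}^∞ δ(k+1)·(1/(1+λ))^{(k+1)²} ≤ 2·log 2 + 1, where δ: ℕ → [0,1] is any function with values in [0,1]. -/
/-- For λ ∈ (0,1] and any δ : ℕ → [0,1],
λ·Σ_{k=0}^∞ δ(k+1)·(1/(1+λ))^{(k+1)²} ≤ 2·log 2 + 1. -/
theorem stmt_3 (l : ℝ) (hl : l ∈ Set.Ioc (0 : ℝ) 1) (δ : ℕ → ℝ)
    (hδ : ∀ k, δ k ∈ Set.Icc (0 : ℝ) 1) :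
    l * ∑' k : ℕ, δ (k + 1) * (1 / (1 + l)) ^ ((k + 1) ^ 2) ≤ 2 * Real.log 2 + 1 := by
  obtain ⟨hl0, hl1⟩ := hl
  set r : ℝ := 1 / (1 + l) with hr
  have h1l : (0:ℝ) < 1 + l := by linarith
  have hr0 : 0 ≤ r := by positivity
  have hr1 : r < 1 := by
    rw [hr, div_lt_one h1l]; linarith
  have hterm : ∀ k : ℕ, δ (k + 1) * r ^ ((k + 1) ^ 2) ≤ r ^ (k + 1) := by
    intro k
    have h1 : δ (k + 1) * r ^ ((k + 1) ^ 2) ≤ r ^ ((k + 1) ^ 2) := by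
      have := (hδ (k + 1)).2
      nlinarith [pow_nonneg hr0 ((k+1)^2)]
    have h2 : r ^ ((k + 1) ^ 2) ≤ r ^ (k + 1) :=
      pow_le_pow_of_le_one hr0 hr1.le (by nlinarith)
    linarith
  have hsum2 : Summable (fun k : ℕ => r ^ (k + 1)) := by
    simpa [pow_succ'] using (summable_geometric_of_lt_one hr0 hr1).mul_left r
  have hsum1 : Summable (fun k : ℕ => δ (k + 1) * r ^ ((k + 1) ^ 2)) := by
    refine Summable.of_nonneg_of_le (fun k => ?_) hterm hsum2
    exact mul_nonneg (hδ (k+1)).1 (pow_nonneg hr0 _)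
  have hle : ∑' k : ℕ, δ (k + 1) * r ^ ((k + 1) ^ 2) ≤ ∑' k : ℕ, r ^ (k + 1) :=
    Summable.tsum_le_tsum hterm hsum1 hsum2
  have hgeom : ∑' k : ℕ, r ^ (k + 1) = r * (1 - r)⁻¹ := by
    rw [show (fun k : ℕ => r ^ (k + 1)) = fun k : ℕ => r * r ^ k from funext fun k => by
      rw [pow_succ']]
    rw [tsum_mul_left, tsum_geometric_of_lt_one hr0 hr1]
  have hval : l * (r * (1 - r)⁻¹) = 1 := by
    rw [hr]; field_simp; rw [add_sub_cancel_left, div_self hl0.ne']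
  have hlog : 0 < Real.log 2 := Real.log_pos (by norm_num)
  calc l * ∑' k : ℕ, δ (k + 1) * r ^ ((k + 1) ^ 2)
      ≤ l * (r * (1 - r)⁻¹) := by
        rw [← hgeom]; exact mul_le_mul_of_nonneg_left hle hl0.le
    _ = 1 := hval
    _ ≤ 2 * Real.log 2 + 1 := by linarith
end

section
/- Let β ∈ (0,1) and K ∈ (2/((3−β)β), 1/β). Define a = (1−Kβ)/(1−Kβ/2), b = (1−β)/(2−β), and φ₀(μ) = (1−β−(2−β)μ)/(β(K−1)(1−μ)) for μ ∈ (a, b]. Then φ₀ is strictly decreasing on (a, b], φ₀(b) = 0, and φ₀(a) = ((1−β)Kβ − 2 + 2Kβ)/(Kβ²(K−1)) < 1; in particular 0 ≤ φ₀(μ) < 1 for all μ ∈ (a, b]. -/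
/-- Properties of the mixed-strategy part of the relaxed equilibrium in the R&D example:
φ₀(μ) = (1−β−(2−β)μ)/(β(K−1)(1−μ)) is strictly decreasing on (a,b], vanishes at b,
takes the stated value < 1 at a, and lies in [0,1) on (a,b]. -/
theorem stmt_15 (β K : ℝ) (hβ : β ∈ Set.Ioo (0 : ℝ) 1)
    (hK : K ∈ Set.Ioo (2 / ((3 - β) * β)) (1 / β)) :
    let a := (1 - K * β) / (1 - K * β / 2)
    let b := (1 - β) / (2 - β)
    let φ₀ : ℝ → ℝ := fun μ => (1 - β - (2 - β) * μ) / (β * (K - 1) * (1 - μ))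
    StrictAntiOn φ₀ (Set.Ioc a b) ∧ φ₀ b = 0 ∧
    φ₀ a = ((1 - β) * K * β - 2 + 2 * K * β) / (K * β ^ 2 * (K - 1)) ∧
    ((1 - β) * K * β - 2 + 2 * K * β) / (K * β ^ 2 * (K - 1)) < 1 ∧
    ∀ μ ∈ Set.Ioc a b, 0 ≤ φ₀ μ ∧ φ₀ μ < 1 := by
  obtain ⟨hβ0, hβ1⟩ := hβ
  obtain ⟨hKlo, hKhi⟩ := hK
  intro a b φ₀
  have hKβ : K * β < 1 := (lt_div_iff₀ hβ0).mp hKhi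
  have h3β : 0 < (3 - β) * β := by nlinarith
  have hKlo' : 2 < K * ((3 - β) * β) := (div_lt_iff₀ h3β).mp hKlo
  have hK1 : 1 < K := by nlinarith
  have hda : 0 < 1 - K * β / 2 := by linarith
  have hdb : 0 < 2 - β := by linarith
  have hc : 0 < β * (K - 1) := by nlinarith
  have hb1 : b < 1 := by
    rw [div_lt_one hdb]; linarith
  have hab : a < b := by
    rw [div_lt_div_iff₀ hda hdb]; nlinarith
  have h1a : 0 < 1 - a := by
    have : a < 1 := by rw [div_lt_one hda]; nlinarith
    linarith
  -- membership facts
  have hmem : ∀ μ ∈ Set.Ioc a b, a < μ ∧ μ ≤ b ∧ 0 < 1 - μ := by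
    intro μ hμ
    exact ⟨hμ.1, hμ.2, by linarith [hμ.2, hb1]⟩
  have hanti : StrictAntiOn φ₀ (Set.Ioc a b) := by
    intro μ1 hμ1 μ2 hμ2 h12
    obtain ⟨_, _, h1⟩ := hmem μ1 hμ1
    obtain ⟨_, _, h2⟩ := hmem μ2 hμ2
    show (1 - β - (2 - β) * μ2) / (β * (K - 1) * (1 - μ2)) <
      (1 - β - (2 - β) * μ1) / (β * (K - 1) * (1 - μ1))
    rw [div_lt_div_iff₀ (by positivity) (by positivity)]
    nlinarith [mul_pos hc (sub_pos.mpr h12)]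
  refine ⟨hanti, ?_, ?_, ?_, ?_⟩
  · show (1 - β - (2 - β) * b) / _ = 0
    have : 1 - β - (2 - β) * b = 0 := by
      show 1 - β - (2 - β) * ((1 - β) / (2 - β)) = 0
      field_simp
      ring
    rw [this, zero_div]
  · show (1 - β - (2 - β) * a) / (β * (K - 1) * (1 - a)) = _
    have haeq2 : a * (2 - K * β) = 2 * (1 - K * β) := by
      show (1 - K * β) / (1 - K * β / 2) * (2 - K * β) = 2 * (1 - K * β)
      rw [div_mul_eq_mul_div, div_eq_iff hda.ne']; ring
    have hKne : K * β ^ 2 * (K - 1) ≠ 0 := by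
      have h : 0 < K * β ^ 2 * (K - 1) := mul_pos (by positivity) (by linarith)
      exact h.ne'
    rw [div_eq_div_iff (mul_pos hc h1a).ne' hKne]
    linear_combination (-(β * (K - 1))) * haeq2
  · rw [div_lt_one (by apply mul_pos (by positivity); linarith)]
    nlinarith
  · intro μ hμ
    obtain ⟨haμ, hμb, h1μ⟩ := hmem μ hμ
    constructor
    · apply div_nonneg _ (by positivity)
      have : (2 - β) * μ ≤ (2 - β) * b := by nlinarith
      have hb' : (2 - β) * b = 1 - β := by
        show (2 - β) * ((1 - β) / (2 - β)) = 1 - β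
        field_simp
      linarith [hb' ▸ this]
    · show (1 - β - (2 - β) * μ) / (β * (K - 1) * (1 - μ)) < 1
      rw [div_lt_one (by positivity)]
      have ha' : 1 - K * β < μ * (1 - K * β / 2) := by
        rw [div_lt_iff₀ hda] at haμ; linarith
      nlinarith
end
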